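/- arXiv:2211.09432 — 2 statements merged into one kernel-verified Lean document; each statement's English description precedes it below -/
import Mathlib

section
/- Let k ≥ 0 be an integer and n ≥ k + 5. Then the graph K_{k+3} ∨ (K₂ ∪ K̄_{n−k−5}) contains no subgraph isomorphic to 2P₅ ∪ kS₄. -/
open SimpleGraph

/-- The number of edges of a simple graph. -/
noncomputable def edgeCount {V : Type*} (G : SimpleGraph V) : ℕ :=
  Nat.card G.edgeSet

/-- `Contains G H` means `G` contains a subgraph isomorphic to `H`,
i.e. there is an injective graph homomorphism from `H` to `G`. -/
def Contains {V W : Type*} (G : SimpleGraph V) (H : SimpleGraph W) : Prop :=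
  ∃ f : H →g G, Function.Injective f

/-- The Turán number `ex(n, H)`: the maximum number of edges of a simple graph on `n`
vertices containing no subgraph isomorphic to `H`. -/
noncomputable def exNum (n : ℕ) {W : Type*} (H : SimpleGraph W) : ℕ :=
  sSup {m : ℕ | ∃ G : SimpleGraph (Fin n), ¬ Contains G H ∧ edgeCount G = m}

/-- The disjoint union of `k` copies of `G`. -/
def copies {V : Type*} (k : ℕ) (G : SimpleGraph V) : SimpleGraph (Fin k × V) where
  Adj u v := u.1 = v.1 ∧ G.Adj u.2 v.2
  symm := ⟨fun u v h => ⟨h.1.symm, h.2.symm⟩⟩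
  loopless := ⟨fun u h => G.irrefl h.2⟩

/-- The join `G ∨ H` of two graphs: their disjoint union together with all edges
between the two vertex sets. -/
def graphJoin {V W : Type*} (G : SimpleGraph V) (H : SimpleGraph W) : SimpleGraph (V ⊕ W) where
  Adj u v := (G.sum H).Adj u v ∨ (u.isLeft ∧ v.isRight) ∨ (u.isRight ∧ v.isLeft)
  symm := ⟨fun u v h => by
    rcases h with h | ⟨h1, h2⟩ | ⟨h1, h2⟩
    · exact Or.inl h.symm
    · exact Or.inr (Or.inr ⟨h2, h1⟩)
    · exact Or.inr (Or.inl ⟨h2, h1⟩)⟩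
  loopless := ⟨fun u => by cases u <;> simp [SimpleGraph.sum]⟩

/-- The star with `m` leaves (a graph on `m + 1` vertices). -/
def starGraph' (m : ℕ) : SimpleGraph (Fin 1 ⊕ Fin m) :=
  completeBipartiteGraph (Fin 1) (Fin m)

private lemma fin2_trans {a b c : Fin 2} (h1 : a ≠ b) (h2 : b ≠ c) : a = c := by
  fin_cases a <;> fin_cases b <;> fin_cases c <;> simp_all

private lemma fin2_cases (a b c : Fin 2) (h1 : a ≠ b) : c = a ∨ c = b := by
  fin_cases a <;> fin_cases b <;> fin_cases c <;> simp_all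


/-- `K_{k+3} ∨ (K₂ ∪ K̄_{n-k-5})` contains no copy of `2 P₅ ∪ k S₄`. -/
theorem G3_free (k n : ℕ) (hn : k + 5 ≤ n) :
    ¬ Contains
      (graphJoin (⊤ : SimpleGraph (Fin (k + 3)))
        ((⊤ : SimpleGraph (Fin 2)) ⊕g (⊥ : SimpleGraph (Fin (n - k - 5)))))
      (copies 2 (pathGraph 5) ⊕g copies k (starGraph' 4)) := by
  set HH := copies 2 (pathGraph 5) ⊕g copies k (starGraph' 4) with hHH
  rintro ⟨f, hf⟩
  -- adjacency of the host graph between two right-side vertices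
  have hostB : ∀ x y : Fin 2 ⊕ Fin (n - k - 5),
      (graphJoin (⊤ : SimpleGraph (Fin (k + 3)))
        ((⊤ : SimpleGraph (Fin 2)) ⊕g (⊥ : SimpleGraph (Fin (n - k - 5))))).Adj
        (Sum.inr x) (Sum.inr y) →
      ∃ a b : Fin 2, x = Sum.inl a ∧ y = Sum.inl b ∧ a ≠ b := by
    intro x y h
    have h' : (((⊤ : SimpleGraph (Fin 2)) ⊕g (⊥ : SimpleGraph (Fin (n - k - 5))))).Adj x y := by
      simpa [graphJoin, SimpleGraph.sum] using h
    cases x <;> cases y <;> simp_all [SimpleGraph.sum]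
  -- no path of length two can map entirely to the right side
  have key2 : ∀ u v w : (Fin 2 × Fin 5) ⊕ (Fin k × (Fin 1 ⊕ Fin 4)),
      HH.Adj u v → HH.Adj v w → u ≠ w →
      (f u).isLeft ∨ (f v).isLeft ∨ (f w).isLeft := by
    intro u v w huv hvw hne
    by_contra hc
    push_neg at hc
    obtain ⟨h1, h2, h3⟩ := hc
    simp only [Bool.not_eq_true, Sum.isLeft_eq_false, Sum.isRight_iff] at h1 h2 h3
    obtain ⟨x, hx⟩ := h1; obtain ⟨y, hy⟩ := h2; obtain ⟨z, hz⟩ := h3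
    have a1 := f.map_adj huv
    have a2 := f.map_adj hvw
    rw [hx, hy] at a1
    rw [hy, hz] at a2
    obtain ⟨a, b, rfl, rfl, hab⟩ := hostB _ _ a1
    obtain ⟨b', c, hb', rfl, hbc⟩ := hostB _ _ a2
    rw [Sum.inl.injEq] at hb'
    subst hb'
    have : a = c := fin2_trans hab hbc
    subst this
    exact hne (hf (hx.trans hz.symm))
  -- no two disjoint edges can map entirely to the right side
  have keyD : ∀ u v w x : (Fin 2 × Fin 5) ⊕ (Fin k × (Fin 1 ⊕ Fin 4)),
      HH.Adj u v → HH.Adj w x → u ≠ w → u ≠ x → v ≠ w → v ≠ x →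
      (f u).isLeft ∨ (f v).isLeft ∨ (f w).isLeft ∨ (f x).isLeft := by
    intro u v w x huv hwx huw hux hvw hvx
    by_contra hc
    push_neg at hc
    obtain ⟨h1, h2, h3, h4⟩ := hc
    simp only [Bool.not_eq_true, Sum.isLeft_eq_false, Sum.isRight_iff] at h1 h2 h3 h4
    obtain ⟨xu, hxu⟩ := h1; obtain ⟨xv, hxv⟩ := h2
    obtain ⟨xw, hxw⟩ := h3; obtain ⟨xx, hxx⟩ := h4
    have a1 := f.map_adj huv
    have a2 := f.map_adj hwx
    rw [hxu, hxv] at a1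
    rw [hxw, hxx] at a2
    obtain ⟨a, b, rfl, rfl, hab⟩ := hostB _ _ a1
    obtain ⟨c, d, rfl, rfl, hcd⟩ := hostB _ _ a2
    rcases fin2_cases a b c hab with rfl | rfl
    · exact huw (hf (hxu.trans hxw.symm))
    · exact hvw (hf (hxv.trans hxw.symm))
  -- path edges inside HH
  have pEdge : ∀ (j : Fin 2) (i i' : Fin 5), (pathGraph 5).Adj i i' →
      HH.Adj (Sum.inl (j, i)) (Sum.inl (j, i')) := by
    intro j i i' h
    show (copies 2 (pathGraph 5)).Adj (j, i) (j, i')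
    exact ⟨rfl, h⟩
  have p01 : (pathGraph 5).Adj 0 1 := by rw [pathGraph_adj]; decide
  have p12 : (pathGraph 5).Adj 1 2 := by rw [pathGraph_adj]; decide
  have p23 : (pathGraph 5).Adj 2 3 := by rw [pathGraph_adj]; decide
  have p34 : (pathGraph 5).Adj 3 4 := by rw [pathGraph_adj]; decide
  -- star edges inside HH
  have sEdge : ∀ (i : Fin k) (t : Fin 4),
      HH.Adj (Sum.inr (i, Sum.inl 0)) (Sum.inr (i, Sum.inr t)) := by
    intro i t
    show (copies k (starGraph' 4)).Adj (i, Sum.inl 0) (i, Sum.inr t)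
    exact ⟨rfl, by simp [starGraph']⟩
  -- each path has two vertices mapped to the left side
  have pathClaim : ∀ j : Fin 2, ∃ i₁ i₂ : Fin 5, i₁ ≠ i₂ ∧
      (f (Sum.inl (j, i₁))).isLeft ∧ (f (Sum.inl (j, i₂))).isLeft := by
    intro j
    by_contra hcon
    push_neg at hcon
    have hmax : ∀ i₁ i₂ : Fin 5, (f (Sum.inl (j, i₁))).isLeft →
        (f (Sum.inl (j, i₂))).isLeft → i₁ = i₂ := by
      intro i₁ i₂ h₁ h₂
      by_contra hne
      exact (hcon i₁ i₂ hne h₁) h₂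
    by_cases hL2 : (f (Sum.inl (j, (2 : Fin 5)))).isLeft
    · have h0 : ¬ (f (Sum.inl (j, (0 : Fin 5)))).isLeft := fun h =>
        absurd (hmax 0 2 h hL2) (by decide)
      have h1 : ¬ (f (Sum.inl (j, (1 : Fin 5)))).isLeft := fun h =>
        absurd (hmax 1 2 h hL2) (by decide)
      have h3 : ¬ (f (Sum.inl (j, (3 : Fin 5)))).isLeft := fun h =>
        absurd (hmax 3 2 h hL2) (by decide)
      have h4 : ¬ (f (Sum.inl (j, (4 : Fin 5)))).isLeft := fun h =>
        absurd (hmax 4 2 h hL2) (by decide)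
      rcases keyD _ _ _ _ (pEdge j 0 1 p01) (pEdge j 3 4 p34)
        (by simp) (by simp) (by simp) (by simp) with h | h | h | h
      · exact h0 h
      · exact h1 h
      · exact h3 h
      · exact h4 h
    · by_cases hL01 : (f (Sum.inl (j, (0 : Fin 5)))).isLeft ∨
          (f (Sum.inl (j, (1 : Fin 5)))).isLeft
      · have h3 : ¬ (f (Sum.inl (j, (3 : Fin 5)))).isLeft := by
          intro h
          rcases hL01 with h0 | h1
          · exact absurd (hmax 3 0 h h0) (by decide)
          · exact absurd (hmax 3 1 h h1) (by decide)
        have h4 : ¬ (f (Sum.inl (j, (4 : Fin 5)))).isLeft := by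
          intro h
          rcases hL01 with h0 | h1
          · exact absurd (hmax 4 0 h h0) (by decide)
          · exact absurd (hmax 4 1 h h1) (by decide)
        rcases key2 _ _ _ (pEdge j 2 3 p23) (pEdge j 3 4 p34) (by simp) with h | h | h
        · exact hL2 h
        · exact h3 h
        · exact h4 h
      · push_neg at hL01
        obtain ⟨h0, h1⟩ := hL01
        rcases key2 _ _ _ (pEdge j 0 1 p01) (pEdge j 1 2 p12) (by simp) with h | h | h
        · exact h0 h
        · exact h1 h
        · exact hL2 h
  -- each star has a vertex mapped to the left side
  have starClaim : ∀ i : Fin k, ∃ w : Fin 1 ⊕ Fin 4, (f (Sum.inr (i, w))).isLeft := by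
    intro i
    by_contra hcon
    push_neg at hcon
    rcases key2 _ _ _ ((sEdge i 0).symm) (sEdge i 1) (by simp) with h | h | h
    · exact (hcon (Sum.inr 0)) h
    · exact (hcon (Sum.inl 0)) h
    · exact (hcon (Sum.inr 1)) h
  choose p1 p2 hpne hp1 hp2 using pathClaim
  choose q hq using starClaim
  set F : Fin 2 ⊕ Fin 2 ⊕ Fin k → (Fin 2 × Fin 5) ⊕ (Fin k × (Fin 1 ⊕ Fin 4)) :=
    Sum.elim (fun j => Sum.inl (j, p1 j))
      (Sum.elim (fun j => Sum.inl (j, p2 j)) (fun i => Sum.inr (i, q i))) with hF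
  have hFinj : Function.Injective F := by
    intro x y h
    rcases x with j | j | i <;> rcases y with j' | j' | i' <;>
      simp only [hF, Sum.elim_inl, Sum.elim_inr, Sum.inl.injEq, Sum.inr.injEq,
        Prod.mk.injEq, reduceCtorEq] at h
    · exact congrArg Sum.inl h.1
    · obtain ⟨rfl, h2⟩ := h; exact absurd h2 (hpne j)
    · obtain ⟨rfl, h2⟩ := h; exact absurd h2.symm (hpne j)
    · exact congrArg (Sum.inr ∘ Sum.inl) h.1
    · exact congrArg (Sum.inr ∘ Sum.inr) h.1
  have hAll : ∀ x : Fin 2 ⊕ Fin 2 ⊕ Fin k, ∃ a : Fin (k + 3), f (F x) = Sum.inl a := by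
    intro x
    rcases x with j | j | i
    · exact Sum.isLeft_iff.mp (hp1 j)
    · exact Sum.isLeft_iff.mp (hp2 j)
    · exact Sum.isLeft_iff.mp (hq i)
  choose g hg using hAll
  have hginj : Function.Injective g := by
    intro x y h
    apply hFinj (hf _)
    rw [hg x, hg y, h]
  have := Fintype.card_le_of_injective g hginj
  simp [Fintype.card_sum] at this
  omega
end

section
/- Let ℓ ≥ 2 and d ≥ 1 be integers with n = d(ℓ−1) ≥ 2. Then ex(n, P_ℓ) = (ℓ−2)n/2, and every graph on n vertices with (ℓ−2)n/2 edges containing no copy of P_ℓ is isomorphic to dK_{ℓ−1}, the disjoint union of d complete graphs on ℓ−1 vertices. -/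
open SimpleGraph

/-- The star with `m` leaves (a graph on `m + 1` vertices). -/
def starGraph (m : ℕ) : SimpleGraph (Fin 1 ⊕ Fin m) :=
  completeBipartiteGraph (Fin 1) (Fin m)

section EGproof
open SimpleGraph List Finset
variable {V W : Type*}
/-- `G` has a path (nodup chain) with `m` vertices. -/
def HasPath (G : SimpleGraph V) (m : ℕ) : Prop :=
  ∃ l : List V, l.IsChain G.Adj ∧ l.Nodup ∧ l.length = m

theorem hasPath_mono {G : SimpleGraph V} {m m' : ℕ} (h : m' ≤ m) (hp : HasPath G m) :
    HasPath G m' := by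
  obtain ⟨l, hc, hn, hl⟩ := hp
  exact ⟨l.take m', hc.take _, hn.sublist (l.take_sublist m'), by simp [hl, Nat.min_eq_left h]⟩

theorem contains_path_iff (G : SimpleGraph V) (m : ℕ) :
    Contains G (pathGraph m) ↔ HasPath G m := by
  constructor
  · rintro ⟨f, hf⟩
    refine ⟨(List.finRange m).map f, ?_, (List.nodup_finRange m).map hf, by simp⟩
    rw [List.isChain_map, List.isChain_iff_getElem]
    intro i hi
    simp only [List.length_finRange] at hi
    apply f.map_adj
    simp only [List.getElem_finRange]
    rw [pathGraph_adj]
    left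
    simp
  · rintro ⟨l, hc, hn, hl⟩
    rw [List.isChain_iff_getElem] at hc
    have key : ∀ i j : ℕ, ∀ (hi : i < l.length) (hj : j < l.length), i + 1 = j →
        G.Adj (l.get ⟨i, hi⟩) (l.get ⟨j, hj⟩) := by
      intro i j hi hj hij
      have h2 : (⟨j, hj⟩ : Fin l.length) = ⟨i + 1, by omega⟩ := Fin.mk_eq_mk.mpr (by omega)
      rw [h2]
      exact hc i (by omega)
    refine ⟨⟨fun i => l.get (i.cast hl.symm), ?_⟩, ?_⟩
    · intro a b hab
      rw [pathGraph_adj] at hab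
      rcases hab with h | h
      · exact key ↑a ↑b _ _ h
      · exact (key ↑b ↑a _ _ h).symm
    · intro a b hab
      have := List.nodup_iff_injective_get.mp hn hab
      simpa [Fin.ext_iff] using this

theorem edgeCount_eq_card [Fintype V] (G : SimpleGraph V) [DecidableRel G.Adj] :
    edgeCount G = G.edgeFinset.card := by
  rw [edgeCount, Nat.card_eq_fintype_card, SimpleGraph.edgeFinset_card]

theorem edgeCount_congr {G : SimpleGraph V} {G' : SimpleGraph W} (e : G ≃g G') :
    edgeCount G = edgeCount G' :=
  Nat.card_congr e.mapEdgeSet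

theorem contains_congr {X : Type*} {G : SimpleGraph V} {G' : SimpleGraph W}
    (e : G ≃g G') (H : SimpleGraph X) : Contains G H ↔ Contains G' H := by
  constructor
  · rintro ⟨f, hf⟩
    exact ⟨e.toHom.comp f, e.injective.comp hf⟩
  · rintro ⟨f, hf⟩
    exact ⟨e.symm.toHom.comp f, e.symm.injective.comp hf⟩
instance {k : ℕ} {G : SimpleGraph V} [DecidableRel G.Adj] :
    DecidableRel (copies k G).Adj :=
  fun u v => inferInstanceAs (Decidable (u.1 = v.1 ∧ G.Adj u.2 v.2))

theorem copies_free {k m ℓ : ℕ} (hm : m < ℓ) :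
    ¬ HasPath (copies k (⊤ : SimpleGraph (Fin m))) ℓ := by
  rintro ⟨l, hc, hn, hl⟩
  have hfst : l.Pairwise (fun a b => a.1 = b.1) := by
    have : (l.map Prod.fst).IsChain Eq := by
      rw [List.isChain_map]
      exact hc.imp (fun a b h => h.1)
    have h2 : ∀ t : List (Fin k), t.IsChain Eq → t.Pairwise Eq := by
      intro t ht
      cases t with
      | nil => exact List.Pairwise.nil
      | cons a s => exact List.IsChain.pairwise ht
    exact List.pairwise_map.mp (h2 _ this)
  have hsnd : (l.map Prod.snd).Nodup := by
    rw [List.Nodup, List.pairwise_map]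
    refine (hfst.and hn).imp ?_
    rintro a b ⟨h1, h2⟩ h3
    exact h2 (Prod.ext h1 h3)
  have := hsnd.length_le_card
  simp [hl, Fintype.card_fin] at this
  omega

theorem copies_top_degree {k m : ℕ} (p : Fin k × Fin m) :
    (copies k (⊤ : SimpleGraph (Fin m))).degree p = m - 1 := by
  rw [← SimpleGraph.card_neighborFinset_eq_degree]
  have : (copies k (⊤ : SimpleGraph (Fin m))).neighborFinset p = {p.1} ×ˢ ({p.2}ᶜ : Finset (Fin m)) := by
    ext q
    simp only [SimpleGraph.mem_neighborFinset, Finset.mem_product, Finset.mem_singleton,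
      Finset.mem_compl]
    show (p.1 = q.1 ∧ p.2 ≠ q.2) ↔ _
    constructor
    · rintro ⟨h1, h2⟩; exact ⟨h1.symm, fun h => h2 h.symm⟩
    · rintro ⟨h1, h2⟩; exact ⟨h1.symm, fun h => h2 h.symm⟩
  rw [this, Finset.card_product, Finset.card_singleton, Finset.card_compl]
  simp

theorem copies_top_edges {k m : ℕ} :
    2 * (copies k (⊤ : SimpleGraph (Fin m))).edgeFinset.card = (m - 1) * (k * m) := by
  have := (copies k (⊤ : SimpleGraph (Fin m))).sum_degrees_eq_twice_card_edges
  rw [← this]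
  rw [Finset.sum_congr rfl (fun p _ => copies_top_degree p)]
  simp [Finset.card_univ, mul_comm, mul_assoc, mul_left_comm]

instance instDecInduce (G : SimpleGraph V) [DecidableRel G.Adj] (s : Set V) :
    DecidableRel (G.induce s).Adj :=
  fun a b => inferInstanceAs (Decidable (G.Adj _ _))

theorem hasPath_induce {G : SimpleGraph V} {s : Set V} {m : ℕ}
    (h : HasPath (G.induce s) m) : HasPath G m := by
  obtain ⟨l, hc, hn, hl⟩ := h
  refine ⟨l.map Subtype.val, ?_, hn.map Subtype.val_injective, by simp [hl]⟩
  rw [List.isChain_map]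
  exact hc.imp (fun a b h => h)

variable [Fintype V] [DecidableEq V] (G : SimpleGraph V) [DecidableRel G.Adj]

theorem degree_induce (s : Finset V) (v : ↥(↑s : Set V)) :
    (G.induce (↑s : Set V)).degree v = ((G.neighborFinset ↑v).filter (· ∈ s)).card := by
  rw [← SimpleGraph.card_neighborFinset_eq_degree]
  refine Finset.card_bij (fun a _ => (a : V)) ?_ ?_ ?_
  · intro a ha
    rw [SimpleGraph.mem_neighborFinset] at ha
    rw [Finset.mem_filter, SimpleGraph.mem_neighborFinset]
    exact ⟨ha, a.2⟩
  · intro a _ b _ h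
    exact Subtype.ext h
  · intro b hb
    rw [Finset.mem_filter, SimpleGraph.mem_neighborFinset] at hb
    exact ⟨⟨b, hb.2⟩, by rw [SimpleGraph.mem_neighborFinset]; exact hb.1, rfl⟩

theorem sum_degree_induce (s : Finset V) :
    ∑ v : ↥(↑s : Set V), (G.induce (↑s : Set V)).degree v
      = ∑ v ∈ s, ((G.neighborFinset v).filter (· ∈ s)).card := by
  rw [← Finset.sum_coe_sort s (fun v => ((G.neighborFinset v).filter (· ∈ s)).card)]
  exact Finset.sum_congr rfl (fun v _ => degree_induce G s v)

/-- a finset closed under adjacency -/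
def Closed (G : SimpleGraph V) (s : Finset V) : Prop :=
  ∀ u v, G.Adj u v → u ∈ s → v ∈ s

theorem Closed.compl {G : SimpleGraph V} {s : Finset V} (h : Closed G s) : Closed G sᶜ := by
  intro u v huv hu
  rw [Finset.mem_compl] at *
  exact fun hv => hu (h v u huv.symm hv)

theorem filter_nbr_closed {s : Finset V} (hcl : Closed G s) {v : V} (hv : v ∈ s) :
    (G.neighborFinset v).filter (· ∈ s) = G.neighborFinset v := by
  rw [Finset.filter_eq_self]
  intro w hw
  rw [SimpleGraph.mem_neighborFinset] at hw
  exact hcl v w hw hv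

theorem twice_edges_closed {s : Finset V} (hcl : Closed G s) :
    2 * G.edgeFinset.card =
      2 * (G.induce (↑s : Set V)).edgeFinset.card
        + 2 * (G.induce (↑(sᶜ) : Set V)).edgeFinset.card := by
  rw [← SimpleGraph.sum_degrees_eq_twice_card_edges, ← SimpleGraph.sum_degrees_eq_twice_card_edges,
    ← SimpleGraph.sum_degrees_eq_twice_card_edges]
  rw [sum_degree_induce, sum_degree_induce]
  have h1 : ∑ v ∈ s, ((G.neighborFinset v).filter (· ∈ s)).card = ∑ v ∈ s, G.degree v :=
    Finset.sum_congr rfl (fun v hv => by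
      rw [filter_nbr_closed G hcl hv, SimpleGraph.card_neighborFinset_eq_degree])
  have h2 : ∑ v ∈ sᶜ, ((G.neighborFinset v).filter (· ∈ sᶜ)).card = ∑ v ∈ sᶜ, G.degree v :=
    Finset.sum_congr rfl (fun v hv => by
      rw [filter_nbr_closed G hcl.compl hv, SimpleGraph.card_neighborFinset_eq_degree])
  rw [h1, h2, Finset.sum_add_sum_compl s (fun v => G.degree v)]

theorem twice_edges_delete (v : V) :
    2 * G.edgeFinset.card =
      2 * (G.induce (↑({v}ᶜ : Finset V) : Set V)).edgeFinset.card + 2 * G.degree v := by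
  rw [← SimpleGraph.sum_degrees_eq_twice_card_edges, ← SimpleGraph.sum_degrees_eq_twice_card_edges,
    sum_degree_induce]
  have key : ∀ w ∈ ({v}ᶜ : Finset V),
      ((G.neighborFinset w).filter (· ∈ ({v}ᶜ : Finset V))).card
        + (if G.Adj w v then 1 else 0) = G.degree w := by
    intro w hw
    rw [← SimpleGraph.card_neighborFinset_eq_degree]
    have h1 : ((G.neighborFinset w).filter (fun x => x ∈ ({v}ᶜ : Finset V))).card
        + ((G.neighborFinset w).filter (fun x => ¬ x ∈ ({v}ᶜ : Finset V))).card
        = (G.neighborFinset w).card := Finset.card_filter_add_card_filter_not _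
    have h2 : (G.neighborFinset w).filter (fun x => ¬ x ∈ ({v}ᶜ : Finset V))
        = (G.neighborFinset w).filter (fun x => x = v) := by
      apply Finset.filter_congr
      intro x _
      simp
    rw [h2, Finset.filter_eq'] at h1
    by_cases hadj : G.Adj w v
    · rw [if_pos hadj]
      rw [if_pos (by rw [SimpleGraph.mem_neighborFinset]; exact hadj)] at h1
      simpa using h1
    · rw [if_neg hadj]
      rw [if_neg (by rw [SimpleGraph.mem_neighborFinset]; exact hadj)] at h1
      simpa using h1
  have hsum : ∑ w ∈ ({v}ᶜ : Finset V), ((G.neighborFinset w).filter (· ∈ ({v}ᶜ : Finset V))).card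
      + ∑ w ∈ ({v}ᶜ : Finset V), (if G.Adj w v then 1 else 0)
      = ∑ w ∈ ({v}ᶜ : Finset V), G.degree w := by
    rw [← Finset.sum_add_distrib]
    exact Finset.sum_congr rfl key
  have hdeg : ∑ w ∈ ({v}ᶜ : Finset V), (if G.Adj w v then 1 else 0) = G.degree v := by
    rw [← SimpleGraph.card_neighborFinset_eq_degree, SimpleGraph.neighborFinset_eq_filter,
      Finset.card_filter]
    rw [← Finset.sum_add_sum_compl ({v} : Finset V) (fun w => if G.Adj v w then 1 else 0)]
    have : ∑ w ∈ ({v} : Finset V), (if G.Adj v w then 1 else 0) = 0 := by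
      simp [Finset.filter_singleton, SimpleGraph.irrefl]
    rw [this, zero_add]
    exact Finset.sum_congr rfl (fun w _ => if_congr (G.adj_comm w v) rfl rfl)
  have htot : ∑ w ∈ ({v} : Finset V), G.degree w + ∑ w ∈ ({v}ᶜ : Finset V), G.degree w
      = ∑ w : V, G.degree w := Finset.sum_add_sum_compl _ _
  simp only [Finset.sum_singleton] at htot
  omega

theorem card_set_coe (s : Finset V) : Fintype.card ↥(↑s : Set V) = s.card := by
  rw [Fintype.card_congr (Equiv.subtypeEquivRight (fun x => Finset.mem_coe))]
  exact Fintype.card_coe s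

theorem card_compl_singleton (v : V) :
    Fintype.card ↥(↑({v}ᶜ : Finset V) : Set V) = Fintype.card V - 1 := by
  rw [card_set_coe, Finset.card_compl, Finset.card_singleton]

/-- rotations of a cyclically-chained list are chained -/
theorem chain'_rotate_of_cyclic {α : Type*} {R : α → α → Prop} {C : List α}
    (hC : List.IsChain R C)
    (hcyc : ∀ x ∈ C.getLast?, ∀ y ∈ C.head?, R x y) (t : ℕ) (ht : t ≤ C.length) :
    List.IsChain R (C.rotate t) := by
  rw [List.rotate_eq_drop_append_take ht, List.isChain_append]
  refine ⟨hC.drop t, hC.take t, ?_⟩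
  intro x hx y hy
  rcases Nat.eq_zero_or_pos t with rfl | htpos
  · simp at hy
  rcases eq_or_lt_of_le ht with rfl | htlt
  · simp at hx
  rw [List.getLast?_drop, if_neg (by omega)] at hx
  rw [List.head?_take, if_neg (by omega)] at hy
  exact hcyc x hx y hy

theorem key_lemma [Fintype V] [DecidableEq V] (G : SimpleGraph V) [DecidableRel G.Adj]
    [DecidableRel G.Reachable] {ℓ : ℕ} (hℓ : 2 ≤ ℓ) (hfree : ¬HasPath G ℓ)
    (hcomp : ∀ v : V, ℓ ≤ (Finset.univ.filter (fun w => G.Reachable v w)).card)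
    (hne : Nonempty V) :
    ∃ v : V, 2 * G.degree v + 2 ≤ ℓ := by
  obtain ⟨v0⟩ := hne
  -- there is an edge
  have edge : ∀ {x y : V}, G.Reachable x y → x ≠ y → ∃ u w, G.Adj u w := by
    rintro x y ⟨p⟩ hxy
    obtain ⟨d, _, _, _⟩ := p.exists_boundary_dart {x} rfl (fun h => hxy h.symm)
    exact ⟨d.fst, d.snd, d.adj⟩
  have h2card : 1 < (Finset.univ.filter (fun w => G.Reachable v0 w)).card :=
    lt_of_lt_of_le (by omega) (hcomp v0)
  obtain ⟨a, ha, b, hb, hab⟩ := Finset.one_lt_card.mp h2card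
  have hedge : ∃ u w, G.Adj u w := by
    rcases eq_or_ne a v0 with rfl | hav
    · exact edge (Finset.mem_filter.mp hb).2 (fun h => hab h)
    · exact edge (Finset.mem_filter.mp ha).2 (fun h => hav h.symm)
  obtain ⟨u, w, huw⟩ := hedge
  have h2path : HasPath G 2 :=
    ⟨[u, w], by simp [List.isChain_cons_cons, huw], by simp [G.ne_of_adj huw], rfl⟩
  -- the longest path
  set S := {m | HasPath G m} with hSdef
  have hub : ∀ m ∈ S, m ≤ ℓ - 1 := by
    intro m hm
    by_contra hcon
    exact hfree (hasPath_mono (by omega) hm)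
  have hbdd : BddAbove S := ⟨ℓ - 1, hub⟩
  have hMmem : sSup S ∈ S := Nat.sSup_mem ⟨2, h2path⟩ hbdd
  set M := sSup S with hMdef
  have hM2 : 2 ≤ M := le_csSup hbdd h2path
  have hMl : M ≤ ℓ - 1 := hub M hMmem
  have hmax : ¬ HasPath G (M + 1) := fun h => by
    have := le_csSup hbdd h
    omega
  obtain ⟨l, hc, hn, hl⟩ := hMmem
  set m := l.length with hmdef
  have hm2 : 2 ≤ m := hl ▸ hM2
  set P : ℕ → V := fun i => l.getD i v0 with hPdef
  have hP : ∀ i (h : i < m), P i = l.get ⟨i, h⟩ := fun i h => List.getD_eq_get l v0 ⟨i, h⟩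
  have hchain : ∀ i, i + 1 < m → G.Adj (P i) (P (i + 1)) := by
    intro i h
    rw [hP i (by omega), hP (i + 1) h]
    exact List.isChain_iff_getElem.mp hc i (by omega)
  have hinj : ∀ i j, i < m → j < m → P i = P j → i = j := by
    intro i j hi hj h
    rw [hP i hi, hP j hj] at h
    have := List.nodup_iff_injective_get.mp hn h
    exact congrArg Fin.val this
  have hmem : ∀ i, i < m → P i ∈ l := fun i h => by
    rw [hP i h]; exact l.get_mem _
  have hmemP : ∀ x ∈ l, ∃ i, i < m ∧ x = P i := by
    intro x hx
    obtain ⟨i, hi⟩ := List.mem_iff_get.mp hx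
    exact ⟨i, i.2, by rw [hP i i.2]; exact hi.symm ▸ (by congr)⟩
  have hlne : l ≠ [] := by
    intro h
    have : l.length = 0 := by rw [h]; rfl
    omega
  have hhead : l.head? = some (P 0) := by
    rw [List.head?_eq_getElem?, List.getElem?_eq_getElem (by omega), hP 0 (by omega)]
    simp [List.get_eq_getElem]
  have hlast : l.getLast? = some (P (m - 1)) := by
    rw [List.getLast?_eq_getElem?, List.getElem?_eq_getElem (by omega), hP (m-1) (by omega)]
    simp [List.get_eq_getElem, hmdef]
  -- maximality: neighbors of endpoints lie on the path
  have hA : ∀ x, G.Adj (P 0) x → x ∈ l := by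
    intro x hx
    by_contra hxl
    refine hmax (hl ▸ ⟨x :: l, ?_, List.nodup_cons.mpr ⟨hxl, hn⟩, by simp [hmdef]⟩)
    refine List.isChain_cons.mpr ⟨?_, hc⟩
    intro y hy
    rw [hhead] at hy
    cases hy
    exact hx.symm
  have hB : ∀ x, G.Adj (P (m - 1)) x → x ∈ l := by
    intro x hx
    by_contra hxl
    refine hmax (hl ▸ ⟨l ++ [x], ?_, ?_, by simp [hmdef]⟩)
    · refine List.isChain_append.mpr ⟨hc, List.isChain_singleton x, ?_⟩
      intro y hy z hz
      rw [hlast] at hy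
      cases hy
      cases hz
      exact hx
    · rw [List.nodup_append]
      exact ⟨hn, List.nodup_singleton x, fun a ha b hb hab => hxl (by simp at hb; subst hb; exact hab ▸ ha)⟩
  -- endpoint degree counting
  set S0 := (Finset.range (m - 1)).filter (fun i => G.Adj (P 0) (P (i + 1))) with hS0def
  set T0 := (Finset.range (m - 1)).filter (fun i => G.Adj (P (m - 1)) (P i)) with hT0def
  have hS0 : S0.card = G.degree (P 0) := by
    rw [← SimpleGraph.card_neighborFinset_eq_degree]
    refine Finset.card_bij (fun i _ => P (i + 1)) ?_ ?_ ?_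
    · intro i hi
      rw [Finset.mem_filter] at hi
      rw [SimpleGraph.mem_neighborFinset]
      exact hi.2
    · intro i hi j hj h
      rw [Finset.mem_filter, Finset.mem_range] at hi hj
      have := hinj (i+1) (j+1) (by omega) (by omega) h
      omega
    · intro x hx
      rw [SimpleGraph.mem_neighborFinset] at hx
      obtain ⟨j, hj, rfl⟩ := hmemP x (hA x hx)
      have hj0 : j ≠ 0 := by
        intro h
        subst h
        exact G.irrefl hx
      refine ⟨j - 1, ?_, by show P (j - 1 + 1) = P j; rw [show j - 1 + 1 = j by omega]⟩
      rw [Finset.mem_filter, Finset.mem_range]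
      refine ⟨by omega, ?_⟩
      rw [show j - 1 + 1 = j by omega]
      exact hx
  have hT0 : T0.card = G.degree (P (m - 1)) := by
    rw [← SimpleGraph.card_neighborFinset_eq_degree]
    refine Finset.card_bij (fun i _ => P i) ?_ ?_ ?_
    · intro i hi
      rw [Finset.mem_filter] at hi
      rw [SimpleGraph.mem_neighborFinset]
      exact hi.2
    · intro i hi j hj h
      rw [Finset.mem_filter, Finset.mem_range] at hi hj
      exact hinj i j (by omega) (by omega) h
    · intro x hx
      rw [SimpleGraph.mem_neighborFinset] at hx
      obtain ⟨j, hj, rfl⟩ := hmemP x (hB x hx)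
      have hjm : j ≠ m - 1 := by
        intro h
        subst h
        exact G.irrefl hx
      exact ⟨j, Finset.mem_filter.mpr ⟨Finset.mem_range.mpr (by omega), hx⟩, rfl⟩
  -- the degree sum at the endpoints is small
  have hsmall : S0.card + T0.card ≤ m - 1 := by
    by_contra hbig
    push_neg at hbig
    -- pigeonhole: common index
    have hcup : (S0 ∪ T0).card ≤ m - 1 := by
      have : S0 ∪ T0 ⊆ Finset.range (m - 1) := by
        intro i hi
        rcases Finset.mem_union.mp hi with h | h
        · exact Finset.mem_of_mem_filter i h
        · exact Finset.mem_of_mem_filter i h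
      simpa using Finset.card_le_card this
    obtain ⟨i, hiS, hiT⟩ : ∃ i, i ∈ S0 ∧ i ∈ T0 := by
      by_contra hno
      push_neg at hno
      have hdisj : Disjoint S0 T0 := by
        rw [Finset.disjoint_left]
        exact fun {x} hx hx2 => hno x hx hx2
      have hcu := Finset.card_union_of_disjoint hdisj
      omega
    rw [Finset.mem_filter, Finset.mem_range] at hiS hiT
    obtain ⟨hilt, hadj1⟩ := hiS
    obtain ⟨-, hadj2⟩ := hiT
    -- the cycle through all vertices of l
    set C : List V := (l.take (i + 1)).reverse ++ l.drop (i + 1) with hCdef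
    have hCperm : C.Perm l := by
      conv_rhs => rw [← List.take_append_drop (i + 1) l]
      exact (l.take (i + 1)).reverse_perm.append_right _
    have hClen : C.length = m := hCperm.length_eq
    have hCnodup : C.Nodup := hCperm.nodup_iff.mpr hn
    have hCmem : ∀ x, (x ∈ C ↔ x ∈ l) := fun x => hCperm.mem_iff
    have htake_ne : l.take (i + 1) ≠ [] := by
      intro h
      have h2 : (l.take (i + 1)).length = 0 := by rw [h]; rfl
      rw [List.length_take] at h2
      omega
    have hdrop_ne : l.drop (i + 1) ≠ [] := by
      intro h
      have h2 : (l.drop (i + 1)).length = 0 := by rw [h]; rfl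
      rw [List.length_drop] at h2
      omega
    have hChead : C.head? = some (P i) := by
      rw [hCdef, List.head?_append, List.head?_reverse]
      have h1 : (l.take (i + 1)).getLast? = some (P i) := by
        rw [List.getLast?_take, if_neg (by omega)]
        simp only [Nat.add_sub_cancel]
        rw [List.getElem?_eq_getElem (by omega : i < l.length)]
        rw [hP i (by omega)]
        simp [List.get_eq_getElem]
      rw [h1]
      rfl
    have hClast : C.getLast? = some (P (m - 1)) := by
      rw [hCdef, List.getLast?_append]
      have h1 : (l.drop (i + 1)).getLast? = some (P (m - 1)) := by
        rw [List.getLast?_drop, if_neg (by omega), hlast]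
      rw [h1]
      rfl
    have hCchain : C.IsChain G.Adj := by
      rw [hCdef, List.isChain_append]
      refine ⟨?_, hc.drop _, ?_⟩
      · rw [List.isChain_reverse]
        exact (hc.take _).imp (fun a b h => h.symm)
      · intro x hx y hy
        rw [List.getLast?_reverse] at hx
        rw [List.head?_take, if_neg (by omega), hhead] at hx
        rw [List.head?_drop, List.getElem?_eq_getElem (by omega)] at hy
        cases hx
        cases hy
        have : l[i+1] = P (i + 1) := by
          rw [hP (i+1) (by omega)]
          simp [List.get_eq_getElem]
        rw [this]
        exact hadj1
    have hCcyc : ∀ x ∈ C.getLast?, ∀ y ∈ C.head?, G.Adj x y := by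
      intro x hx y hy
      rw [hClast] at hx
      rw [hChead] at hy
      cases hx
      cases hy
      exact hadj2
    -- find a vertex outside the path, adjacent to the path
    have hout : ∃ y ∈ Finset.univ.filter (fun w => G.Reachable (P 0) w), y ∉ l.toFinset := by
      rw [← Finset.not_subset]
      intro hsub
      have h1 := Finset.card_le_card hsub
      rw [List.toFinset_card_of_nodup hn] at h1
      have h2 := hcomp (P 0)
      omega
    obtain ⟨y, hyreach, hyl⟩ := hout
    have hyreach' : G.Reachable y (P 0) := ((Finset.mem_filter.mp hyreach).2).symm
    obtain ⟨p⟩ := hyreach'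
    have hyl' : y ∈ ({x | x ∉ l} : Set V) := by simpa using hyl
    obtain ⟨d, _, hd1, hd2⟩ := p.exists_boundary_dart {x | x ∉ l} hyl'
      (by simp [hmem 0 (by omega)])
    simp only [Set.mem_setOf_eq, not_not] at hd1 hd2
    -- d.fst ∉ l, d.snd ∈ l
    have hdC : d.snd ∈ C := (hCmem d.snd).mpr hd2
    set t := C.idxOf d.snd with htdef
    have ht : t < C.length := List.idxOf_lt_length_iff.mpr hdC
    -- the longer path
    refine hmax (hl ▸ ⟨d.fst :: C.rotate t, ?_, ?_, by simp [hClen]⟩)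
    · refine List.isChain_cons.mpr ⟨?_, chain'_rotate_of_cyclic hCchain hCcyc t (le_of_lt ht)⟩
      intro z hz
      rw [List.head?_rotate ht, List.getElem?_eq_getElem ht] at hz
      cases hz
      have hCt : C[t] = d.snd := List.idxOf_get ht
      rw [hCt]
      exact d.adj
    · rw [List.nodup_cons]
      constructor
      · rw [List.mem_rotate, hCmem]
        exact hd1
      · exact List.nodup_rotate.mpr hCnodup
  -- conclude
  rw [hS0, hT0] at hsmall
  have : 2 * G.degree (P 0) + 2 ≤ ℓ ∨ 2 * G.degree (P (m - 1)) + 2 ≤ ℓ := by omega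
  rcases this with h | h
  · exact ⟨P 0, h⟩
  · exact ⟨P (m - 1), h⟩
end EGproof

section E
open SimpleGraph Finset
variable {V : Type*}

theorem twice_edges_le_max [Fintype V] (G : SimpleGraph V) [DecidableRel G.Adj] :
    2 * G.edgeFinset.card ≤ Fintype.card V * (Fintype.card V - 1) := by
  rw [← SimpleGraph.sum_degrees_eq_twice_card_edges]
  calc ∑ v : V, G.degree v ≤ ∑ _v : V, (Fintype.card V - 1) :=
        Finset.sum_le_sum (fun v _ => by have := G.degree_lt_card_verts v; omega)
    _ = Fintype.card V * (Fintype.card V - 1) := by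
        rw [Finset.sum_const, Finset.card_univ, smul_eq_mul]

theorem degree_eq_of_sum_max [Fintype V] (G : SimpleGraph V) [DecidableRel G.Adj]
    (h : 2 * G.edgeFinset.card = Fintype.card V * (Fintype.card V - 1)) (v : V) :
    G.degree v = Fintype.card V - 1 := by
  by_contra hne
  have hlt : G.degree v < Fintype.card V - 1 :=
    lt_of_le_of_ne (by have := G.degree_lt_card_verts v; omega) hne
  have hsum := G.sum_degrees_eq_twice_card_edges
  have hstrict : ∑ w : V, G.degree w < ∑ _w : V, (Fintype.card V - 1) :=
    Finset.sum_lt_sum (fun w _ => by have := G.degree_lt_card_verts w; omega)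
      ⟨v, Finset.mem_univ v, hlt⟩
  rw [Finset.sum_const, Finset.card_univ, smul_eq_mul] at hstrict
  omega

theorem complete_of_degrees_max [Fintype V] [DecidableEq V] (G : SimpleGraph V)
    [DecidableRel G.Adj]
    (h : ∀ v, G.degree v = Fintype.card V - 1) {a b : V} (hab : a ≠ b) : G.Adj a b := by
  have hsub : G.neighborFinset a ⊆ Finset.univ.erase a := by
    intro x hx
    rw [SimpleGraph.mem_neighborFinset] at hx
    exact Finset.mem_erase.mpr ⟨(G.ne_of_adj hx).symm, Finset.mem_univ x⟩
  have hcard : (Finset.univ.erase a).card ≤ (G.neighborFinset a).card := by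
    rw [SimpleGraph.card_neighborFinset_eq_degree, h,
      Finset.card_erase_of_mem (Finset.mem_univ a), Finset.card_univ]
  have heq := Finset.eq_of_subset_of_card_le hsub hcard
  have hb : b ∈ G.neighborFinset a := by
    rw [heq]
    exact Finset.mem_erase.mpr ⟨hab.symm, Finset.mem_univ b⟩
  rwa [SimpleGraph.mem_neighborFinset] at hb

theorem EG_main {ℓ : ℕ} (hℓ : 2 ≤ ℓ) :
    ∀ n : ℕ, ∀ (V : Type) [instF : Fintype V] [instD : DecidableEq V] (G : SimpleGraph V)
      [instA : DecidableRel G.Adj], Fintype.card V = n → ¬HasPath G ℓ →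
      2 * G.edgeFinset.card ≤ (ℓ - 2) * n ∧
      (2 * G.edgeFinset.card = (ℓ - 2) * n →
        (∀ u v w : V, G.Adj u v → G.Adj v w → u ≠ w → G.Adj u w) ∧
        ∀ v : V, G.degree v = ℓ - 2) := by
  intro n
  induction n using Nat.strong_induction_on with
  | _ n IH =>
  intro V instF instD G instA hcard hfree
  haveI : DecidableRel G.Reachable := Classical.decRel _
  rcases Nat.eq_zero_or_pos n with rfl | hn1
  · -- empty graph
    haveI : IsEmpty V := Fintype.card_eq_zero_iff.mp hcard
    have he : G.edgeFinset.card = 0 := by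
      have := G.sum_degrees_eq_twice_card_edges
      rw [Finset.sum_of_isEmpty] at this
      omega
    exact ⟨by omega, fun _ => ⟨fun u => isEmptyElim u, fun v => isEmptyElim v⟩⟩
  by_cases hsplit : ∃ v : V, (Finset.univ.filter (fun w => G.Reachable v w)).card ≤ ℓ - 1
  · -- CASE A : a small component exists
    obtain ⟨v, hv⟩ := hsplit
    set s : Finset V := Finset.univ.filter (fun w => G.Reachable v w) with hsdef
    have hcl : Closed G s := by
      intro x y hxy hx
      rw [Finset.mem_filter] at hx ⊢
      have hvx : G.Reachable v x := hx.2
      exact ⟨Finset.mem_univ y, hvx.trans hxy.reachable⟩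
    have hvs : v ∈ s := Finset.mem_filter.mpr ⟨Finset.mem_univ v, Reachable.refl v⟩
    set c := s.card with hcdef
    have hc1 : 1 ≤ c := Finset.card_pos.mpr ⟨v, hvs⟩
    have hcn : c ≤ n := hcard ▸ Finset.card_le_univ s
    have hcards : Fintype.card ↥(↑s : Set V) = c := card_set_coe s
    have hcardsc : Fintype.card ↥(↑(sᶜ) : Set V) = n - c := by
      rw [card_set_coe, Finset.card_compl, hcard]
    have hsplit_edges := twice_edges_closed G hcl
    -- bound on the small component
    have hG1 : 2 * (G.induce (↑s : Set V)).edgeFinset.card ≤ c * (c - 1) := by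
      have := twice_edges_le_max (G.induce (↑s : Set V))
      rwa [hcards] at this
    have hc_prod : c * (c - 1) ≤ (ℓ - 2) * c := by
      calc c * (c - 1) ≤ c * (ℓ - 2) := Nat.mul_le_mul_left c (by omega)
        _ = (ℓ - 2) * c := Nat.mul_comm _ _
    -- induction on the rest
    have hfree2 : ¬ HasPath (G.induce (↑(sᶜ) : Set V)) ℓ :=
      fun h => hfree (hasPath_induce h)
    have hIH := IH (n - c) (by omega) ↥(↑(sᶜ) : Set V) (G.induce (↑(sᶜ) : Set V))
      hcardsc hfree2
    have hIH1 := hIH.1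
    have hmul : (ℓ - 2) * c + (ℓ - 2) * (n - c) = (ℓ - 2) * n := by
      rw [← Nat.mul_add, Nat.add_sub_cancel' hcn]
    refine ⟨by omega, ?_⟩
    intro heq
    -- equality analysis
    have he1 : 2 * (G.induce (↑s : Set V)).edgeFinset.card = c * (c - 1) := by omega
    have he1' : c * (c - 1) = (ℓ - 2) * c := by omega
    have he2 : 2 * (G.induce (↑(sᶜ) : Set V)).edgeFinset.card = (ℓ - 2) * (n - c) := by omega
    have hcℓ : c = ℓ - 1 := by
      have h1 : (c - 1) * c = (ℓ - 2) * c := by rw [Nat.mul_comm (c-1) c]; exact he1'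
      have := Nat.eq_of_mul_eq_mul_right (by omega : 0 < c) h1
      omega
    -- component degrees
    have hdeg1 : ∀ x : ↥(↑s : Set V), (G.induce (↑s : Set V)).degree x = ℓ - 2 := by
      intro x
      have := degree_eq_of_sum_max (G.induce (↑s : Set V)) (by rw [hcards]; omega) x
      rw [hcards] at this
      omega
    have hcomplete1 : ∀ a b : ↥(↑s : Set V), a ≠ b → (G.induce (↑s : Set V)).Adj a b := by
      intro a b hab
      exact complete_of_degrees_max _ (fun y => by rw [hcards, hcdef] at *; rw [hdeg1 y]; omega) hab
    obtain ⟨htrans2, hdeg2⟩ := hIH.2 he2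
    constructor
    · -- local transitivity
      intro x y z hxy hyz hxz
      by_cases hx : x ∈ s
      · have hy : y ∈ s := hcl x y hxy hx
        have hz : z ∈ s := hcl y z hyz hy
        have := hcomplete1 ⟨x, hx⟩ ⟨z, hz⟩ (fun h => hxz (congrArg Subtype.val h))
        exact this
      · have hx' : x ∈ sᶜ := Finset.mem_compl.mpr hx
        have hy' : y ∈ sᶜ := hcl.compl x y hxy hx'
        have hz' : z ∈ sᶜ := hcl.compl y z hyz hy'
        exact htrans2 ⟨x, hx'⟩ ⟨y, hy'⟩ ⟨z, hz'⟩ hxy hyz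
          (fun h => hxz (congrArg Subtype.val h))
    · -- degrees
      intro x
      by_cases hx : x ∈ s
      · have h1 := degree_induce G s ⟨x, hx⟩
        rw [filter_nbr_closed G hcl hx, SimpleGraph.card_neighborFinset_eq_degree] at h1
        rw [← h1]
        exact hdeg1 ⟨x, hx⟩
      · have hx' : x ∈ sᶜ := Finset.mem_compl.mpr hx
        have h1 := degree_induce G (sᶜ) ⟨x, hx'⟩
        rw [filter_nbr_closed G hcl.compl hx', SimpleGraph.card_neighborFinset_eq_degree] at h1
        rw [← h1]
        exact hdeg2 ⟨x, hx'⟩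
  · -- CASE B : all components big
    push_neg at hsplit
    have hcomp : ∀ v : V, ℓ ≤ (Finset.univ.filter (fun w => G.Reachable v w)).card := by
      intro v
      have := hsplit v
      omega
    have hne : Nonempty V := Fintype.card_pos_iff.mp (by omega)
    obtain ⟨v, hdegv⟩ := key_lemma G hℓ hfree hcomp hne
    set s : Finset V := {v}ᶜ with hsdef
    have hdel : 2 * G.edgeFinset.card
        = 2 * (G.induce (↑s : Set V)).edgeFinset.card + 2 * G.degree v :=
      twice_edges_delete G v
    have hcards : Fintype.card ↥(↑s : Set V) = n - 1 := by
      rw [card_compl_singleton, hcard]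
    have hfree2 : ¬ HasPath (G.induce (↑s : Set V)) ℓ := fun h => hfree (hasPath_induce h)
    have hIH := IH (n - 1) (by omega) ↥(↑s : Set V) (G.induce (↑s : Set V)) hcards hfree2
    have hIH1 := hIH.1
    have hmul : (ℓ - 2) * (n - 1) + (ℓ - 2) = (ℓ - 2) * n := by
      have : (ℓ - 2) * (n - 1) + (ℓ - 2) * 1 = (ℓ - 2) * n := by
        rw [← Nat.mul_add, Nat.sub_add_cancel (by omega)]
      omega
    refine ⟨by omega, ?_⟩
    intro heq
    exfalso
    -- equality forces a contradiction: we can build a path with ℓ vertices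
    have he2 : 2 * (G.induce (↑s : Set V)).edgeFinset.card = (ℓ - 2) * (n - 1) := by omega
    have hdveq : 2 * G.degree v = ℓ - 2 := by omega
    obtain ⟨htrans2, hdeg2⟩ := hIH.2 he2
    -- v has a neighbor
    have hnbr : ∃ u : V, G.Adj v u := by
      have h2 : 1 < (Finset.univ.filter (fun w => G.Reachable v w)).card :=
        lt_of_lt_of_le (by omega : (1:ℕ) < ℓ) (hcomp v)
      obtain ⟨a, ha, b, hb, hab⟩ := Finset.one_lt_card.mp h2
      have hreach : ∀ x ∈ Finset.univ.filter (fun w => G.Reachable v w), G.Reachable v x :=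
        fun x hx => (Finset.mem_filter.mp hx).2
      have : ∃ x, G.Reachable v x ∧ x ≠ v := by
        rcases eq_or_ne a v with rfl | hav
        · exact ⟨b, hreach b hb, fun h => hab h.symm⟩
        · exact ⟨a, hreach a ha, hav⟩
      obtain ⟨x, hvx, hxv⟩ := this
      obtain ⟨p⟩ := hvx
      obtain ⟨d, _, hd1, hd2⟩ := p.exists_boundary_dart {v} rfl (fun h => hxv h)
      rw [Set.mem_singleton_iff] at hd1
      exact ⟨d.snd, hd1 ▸ d.adj⟩
    obtain ⟨u, hu⟩ := hnbr
    have hus : u ∈ s := Finset.mem_compl.mpr (by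
      rw [Finset.mem_singleton]
      exact fun h => G.irrefl (h ▸ hu))
    set u' : ↥(↑s : Set V) := ⟨u, hus⟩ with hu'def
    set N := (G.induce (↑s : Set V)).neighborFinset u' with hNdef
    have hNcard : N.card = ℓ - 2 := by
      rw [hNdef, SimpleGraph.card_neighborFinset_eq_degree]
      exact hdeg2 u'
    -- the inner path : u' followed by all its neighbours
    have hNnodup : N.toList.Nodup := Finset.nodup_toList N
    have hNadj : ∀ x ∈ N.toList, (G.induce (↑s : Set V)).Adj u' x := by
      intro x hx
      rw [Finset.mem_toList, hNdef, SimpleGraph.mem_neighborFinset] at hx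
      exact hx
    have hchainN : N.toList.IsChain (G.induce (↑s : Set V)).Adj := by
      have hpw : N.toList.Pairwise (G.induce (↑s : Set V)).Adj := by
        refine hNnodup.imp_of_mem ?_
        intro a b ha hb hab
        exact htrans2 a u' b ((hNadj a ha).symm) (hNadj b hb) hab
      exact hpw.isChain
    set L' : List ↥(↑s : Set V) := u' :: N.toList with hL'def
    have hL'chain : L'.IsChain (G.induce (↑s : Set V)).Adj := by
      refine List.isChain_cons.mpr ⟨?_, hchainN⟩
      intro y hy
      exact hNadj y (List.mem_of_mem_head? hy)
    have hL'nodup : L'.Nodup := by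
      rw [List.nodup_cons]
      refine ⟨?_, hNnodup⟩
      rw [Finset.mem_toList, hNdef, SimpleGraph.mem_neighborFinset]
      exact (G.induce (↑s : Set V)).irrefl
    have hL'len : L'.length = ℓ - 1 := by
      rw [hL'def, List.length_cons, Finset.length_toList, hNcard]
      omega
    -- the full path
    refine hfree ⟨v :: L'.map Subtype.val, ?_, ?_, ?_⟩
    · refine List.isChain_cons.mpr ⟨?_, ?_⟩
      · intro y hy
        rw [hL'def] at hy
        simp only [List.map_cons, List.head?_cons] at hy
        cases hy
        exact hu
      · rw [List.isChain_map]
        exact hL'chain.imp (fun a b h => h)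
    · rw [List.nodup_cons]
      constructor
      · intro hvmem
        rw [List.mem_map] at hvmem
        obtain ⟨x, hx, hxv⟩ := hvmem
        have hx2 : (x : V) ∈ ({v}ᶜ : Finset V) := Finset.mem_coe.mp x.2
        rw [Finset.mem_compl, Finset.mem_singleton] at hx2
        exact hx2 hxv
      · exact hL'nodup.map Subtype.val_injective
    · rw [List.length_cons, List.length_map, hL'len]
      omega

end E

section F
open SimpleGraph
variable {V : Type*}

theorem iso_of_extremal [Fintype V] [DecidableEq V] (G : SimpleGraph V)
    [DecidableRel G.Adj] {ℓ d : ℕ} (hℓ : 2 ≤ ℓ)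
    (htrans : ∀ u v w : V, G.Adj u v → G.Adj v w → u ≠ w → G.Adj u w)
    (hdeg : ∀ v : V, G.degree v = ℓ - 2)
    (hcard : Fintype.card V = d * (ℓ - 1)) :
    Nonempty (G ≃g copies d (⊤ : SimpleGraph (Fin (ℓ - 1)))) := by
  classical
  -- reachability implies adjacency
  have reach_adj : ∀ (u v : V), G.Reachable u v → u ≠ v → G.Adj u v := by
    intro u v hr
    obtain ⟨p⟩ := hr
    induction p with
    | nil => intro h; exact absurd rfl h
    | @cons a b c h q ih =>
      intro hac
      rcases eq_or_ne b c with rfl | hbc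
      · exact h
      · exact htrans a b c h (ih hbc) hac
  haveI : DecidableEq G.ConnectedComponent := Classical.decEq _
  -- each fiber has ℓ - 1 elements
  have fibcard : ∀ c : G.ConnectedComponent,
      Fintype.card {x // G.connectedComponentMk x = c} = ℓ - 1 := by
    intro c
    obtain ⟨v0, rfl⟩ := c.exists_rep
    have key : ∀ x, x ∈ insert v0 (G.neighborFinset v0) ↔
        G.connectedComponentMk x = G.connectedComponentMk v0 := by
      intro x
      rw [Finset.mem_insert, SimpleGraph.mem_neighborFinset]
      constructor
      · rintro (rfl | hadj)
        · rfl
        · exact SimpleGraph.ConnectedComponent.eq.mpr hadj.symm.reachable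
      · intro hmk
        have hr : G.Reachable x v0 := SimpleGraph.ConnectedComponent.eq.mp hmk
        rcases eq_or_ne x v0 with rfl | hx
        · exact Or.inl rfl
        · exact Or.inr (reach_adj x v0 hr hx).symm
    refine Eq.trans (@Fintype.card_congr _ _ (id _) (by infer_instance)
      (Equiv.subtypeEquivRight (q := fun x => x ∈ insert v0 (G.neighborFinset v0))
        (fun x => (key x).symm))) ?_
    rw [Fintype.card_coe, Finset.card_insert_of_notMem (by
      rw [SimpleGraph.mem_neighborFinset]; exact G.irrefl),
      SimpleGraph.card_neighborFinset_eq_degree, hdeg]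
    omega
  -- number of components
  have hcards : Fintype.card V = Fintype.card G.ConnectedComponent * (ℓ - 1) := by
    rw [← Fintype.card_congr (Equiv.sigmaFiberEquiv (G.connectedComponentMk)),
      Fintype.card_sigma]
    rw [Finset.sum_congr rfl (fun c _ => fibcard c)]
    rw [Finset.sum_const, Finset.card_univ, smul_eq_mul]
  have hd : Fintype.card G.ConnectedComponent = d := by
    have h1 : Fintype.card G.ConnectedComponent * (ℓ - 1) = d * (ℓ - 1) := by
      rw [← hcards, hcard]
    exact Nat.eq_of_mul_eq_mul_right (by omega) h1
  -- the equivalence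
  let eComp : G.ConnectedComponent ≃ Fin d := Fintype.equivFinOfCardEq hd
  let eFib : ∀ c : G.ConnectedComponent,
      {x // G.connectedComponentMk x = c} ≃ Fin (ℓ - 1) :=
    fun c => Fintype.equivFinOfCardEq (fibcard c)
  let φ : V ≃ Fin d × Fin (ℓ - 1) :=
    ((Equiv.sigmaFiberEquiv (G.connectedComponentMk)).symm.trans
      (Equiv.sigmaCongrRight eFib)).trans
      ((Equiv.sigmaEquivProd G.ConnectedComponent (Fin (ℓ - 1))).trans
        (Equiv.prodCongr eComp (Equiv.refl _)))
  have hφ1 : ∀ u : V, (φ u).1 = eComp (G.connectedComponentMk u) := fun u => rfl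
  refine ⟨⟨φ, ?_⟩⟩
  intro u v
  show (copies d (⊤ : SimpleGraph (Fin (ℓ - 1)))).Adj (φ u) (φ v) ↔ G.Adj u v
  constructor
  · rintro ⟨h1, h2⟩
    rw [hφ1, hφ1] at h1
    have hmk : G.connectedComponentMk u = G.connectedComponentMk v := eComp.injective h1
    have hne : u ≠ v := by
      rintro rfl
      exact (h2 : (φ u).2 ≠ (φ u).2) rfl
    exact reach_adj u v (SimpleGraph.ConnectedComponent.eq.mp hmk) hne
  · intro hadj
    have hmk : G.connectedComponentMk u = G.connectedComponentMk v :=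
      SimpleGraph.ConnectedComponent.eq.mpr hadj.reachable
    have h1 : (φ u).1 = (φ v).1 := by rw [hφ1, hφ1, hmk]
    refine ⟨h1, ?_⟩
    intro h2
    exact G.ne_of_adj hadj (φ.injective (Prod.ext h1 h2))

end F

/-- Erdős–Gallai: Turán number of `P_ℓ` when `ℓ - 1` divides `n`, with the
unique extremal graph `d K_{ℓ-1}`. -/
theorem erdos_gallai_path (ℓ d n : ℕ) (hℓ : 2 ≤ ℓ) (hd : 1 ≤ d)
    (hn : n = d * (ℓ - 1)) (hn2 : 2 ≤ n) :
    exNum n (pathGraph ℓ) = (ℓ - 2) * n / 2 ∧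
    ∀ G : SimpleGraph (Fin n), ¬ Contains G (pathGraph ℓ) →
      edgeCount G = (ℓ - 2) * n / 2 →
      Nonempty (G ≃g copies d (⊤ : SimpleGraph (Fin (ℓ - 1)))) := by
  classical
  set C := copies d (⊤ : SimpleGraph (Fin (ℓ - 1))) with hCdef
  have hecard : Fintype.card (Fin n) = Fintype.card (Fin d × Fin (ℓ - 1)) := by
    simp [hn]
  set e : Fin n ≃ Fin d × Fin (ℓ - 1) := Fintype.equivOfCardEq hecard with hedef
  set G0 : SimpleGraph (Fin n) := C.comap ⇑e.toEmbedding with hG0def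
  have iso0 : G0 ≃g C := SimpleGraph.Iso.comap e C
  -- the extremal count
  have heven : 2 * edgeCount G0 = (ℓ - 2) * n := by
    rw [edgeCount_congr iso0, edgeCount_eq_card]
    rw [copies_top_edges]
    rw [show (ℓ - 1) - 1 = ℓ - 2 by omega, ← hn]
  have hfree0 : ¬ Contains G0 (pathGraph ℓ) := by
    rw [contains_congr iso0, contains_path_iff]
    exact copies_free (by omega)
  have hm0 : edgeCount G0 = (ℓ - 2) * n / 2 := by omega
  -- upper bound
  have hub : ∀ x ∈ {m : ℕ | ∃ G : SimpleGraph (Fin n),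
      ¬ Contains G (pathGraph ℓ) ∧ edgeCount G = m}, x ≤ (ℓ - 2) * n / 2 := by
    rintro x ⟨G, hGfree, hGcount⟩
    haveI : DecidableRel G.Adj := Classical.decRel _
    have hfreeG : ¬ HasPath G ℓ := fun h => hGfree ((contains_path_iff G ℓ).mpr h)
    have hmain := (EG_main hℓ n (Fin n) G (by simp) hfreeG).1
    have hce : edgeCount G = G.edgeFinset.card := edgeCount_eq_card G
    omega
  have hmem : (ℓ - 2) * n / 2 ∈ {m : ℕ | ∃ G : SimpleGraph (Fin n),
      ¬ Contains G (pathGraph ℓ) ∧ edgeCount G = m} := ⟨G0, hfree0, hm0⟩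
  constructor
  · exact le_antisymm (csSup_le ⟨_, hmem⟩ hub) (le_csSup ⟨_, hub⟩ hmem)
  · intro G hGfree hGcount
    haveI : DecidableRel G.Adj := Classical.decRel _
    have hfreeG : ¬ HasPath G ℓ := fun h => hGfree ((contains_path_iff G ℓ).mpr h)
    have hce : edgeCount G = G.edgeFinset.card := edgeCount_eq_card G
    have hfull : 2 * G.edgeFinset.card = (ℓ - 2) * n := by omega
    obtain ⟨htrans, hdeg⟩ := (EG_main hℓ n (Fin n) G (by simp) hfreeG).2 hfull
    exact iso_of_extremal G hℓ htrans hdeg (by simp [hn])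
end
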